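/- Let f be a first-order monotone boolean function of arity k such that π₁(tr f) has no bivalued linearly coherent subset (i.e. bcc(f) = ∞). Then f is invariant under P^m_{m,m} for every m ≥ 0. -/
import Mathlib


/-- The flat boolean domain: `⊥`, `tt`, `ff`. -/
abbrev Bb : Type := WithBot Bool

/-- The flat (domain) order on `Bb`: `⊥` below everything, `tt` and `ff` incomparable. -/
def bLE (a b : Bb) : Prop := a = ⊥ ∨ a = b

/-- Pointwise flat order on tuples. -/
def tupLE {k : ℕ} (x y : Fin k → Bb) : Prop := ∀ i, bLE (x i) (y i)

/-- Strict pointwise flat order on tuples. -/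
def tupLT {k : ℕ} (x y : Fin k → Bb) : Prop := tupLE x y ∧ x ≠ y

/-- A first-order boolean function is monotone for the flat order. -/
def FlatMono {k : ℕ} (f : (Fin k → Bb) → Bb) : Prop :=
  ∀ x y, tupLE x y → bLE (f x) (f y)

/-- The presequentiality relation `P^n_{A,B}` (indices `0,…,n-1`). -/
def Preseq (n : ℕ) (A B : Finset ℕ) : Set (Fin n → Bb) :=
  {d | (∃ i : Fin n, (i : ℕ) ∈ A ∧ d i = ⊥) ∨
       (∀ i j : Fin n, (i : ℕ) ∈ B → (j : ℕ) ∈ B → d i = d j)}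

/-- `P^n_{m,m'}`: the presequentiality relation on initial segments. -/
def PreseqSeg (n m m' : ℕ) : Set (Fin n → Bb) :=
  Preseq n (Finset.range m) (Finset.range m')

/-- `f` (arity `k`) is invariant under an `n`-ary relation `R`. -/
def Invariant {k n : ℕ} (f : (Fin k → Bb) → Bb) (R : Set (Fin n → Bb)) : Prop :=
  ∀ x : Fin k → Fin n → Bb, (∀ m, x m ∈ R) →
    (fun i => f (fun m => x m i)) ∈ R

/-- `π₁(tr f)`: the set of minimal points where `f` is defined. -/
def traceDom {k : ℕ} (f : (Fin k → Bb) → Bb) : Set (Fin k → Bb) :=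
  {v | f v ≠ ⊥ ∧ ∀ v', tupLT v' v → f v' = ⊥}

/-- Linear coherence of a set of tuples. -/
def LinCoherent {k : ℕ} (S : Set (Fin k → Bb)) : Prop :=
  ∀ j : Fin k, (∀ v ∈ S, v j ≠ ⊥) → ∀ v ∈ S, ∀ w ∈ S, v j = w j

/-- The coefficient of coherence `cc(f) ∈ ℕ∞`. -/
noncomputable def cc {k : ℕ} (f : (Fin k → Bb) → Bb) : ℕ∞ :=
  sInf {c : ℕ∞ | ∃ S : Finset (Fin k → Bb),
    ↑S ⊆ traceDom f ∧ 2 ≤ S.card ∧ LinCoherent (↑S : Set (Fin k → Bb)) ∧ c = (S.card : ℕ∞)}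

/-- The bivalued coefficient of coherence `bcc(f) ∈ ℕ∞`. -/
noncomputable def bcc {k : ℕ} (f : (Fin k → Bb) → Bb) : ℕ∞ :=
  sInf {c : ℕ∞ | ∃ S : Finset (Fin k → Bb),
    ↑S ⊆ traceDom f ∧ 3 ≤ S.card ∧ LinCoherent (↑S : Set (Fin k → Bb)) ∧
    (∃ v ∈ S, f v = ((true : Bool) : Bb)) ∧ (∃ v ∈ S, f v = ((false : Bool) : Bb)) ∧
    c = (S.card : ℕ∞)}

/-- M-sequentiality, by induction on the arity. -/
def MSeq : ∀ {k : ℕ}, ((Fin k → Bb) → Bb) → Prop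
  | 0, f => ∃ b, ∀ x, f x = b
  | (k+1), f => (∃ b, ∀ x, f x = b) ∨
      ∃ i : Fin (k+1), (∀ x, x i = ⊥ → f x = ⊥) ∧
        ∀ c : Bool, MSeq (fun x : Fin k → Bb => f (i.insertNth (c : Bb) x))

lemma tupLE_refl {k : ℕ} (x : Fin k → Bb) : tupLE x x := fun _ => Or.inr rfl

lemma tupLE_trans {k : ℕ} {x y z : Fin k → Bb} (h1 : tupLE x y) (h2 : tupLE y z) :
    tupLE x z := by
  intro i
  rcases h1 i with h | h
  · exact Or.inl h
  · rw [h]; exact h2 i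

/-- Every point where `f` is defined dominates a minimal such point with the same value. -/
lemma exists_min_aux {k : ℕ} (f : (Fin k → Bb) → Bb) (hf : FlatMono f) :
    ∀ N : ℕ, ∀ c : Fin k → Bb, (Finset.univ.filter (fun l => c l ≠ ⊥)).card ≤ N →
      f c ≠ ⊥ → ∃ v, tupLE v c ∧ v ∈ traceDom f ∧ f v = f c := by
  intro N
  induction N with
  | zero =>
    intro c hcard hc
    refine ⟨c, tupLE_refl c, ⟨hc, ?_⟩, rfl⟩
    intro v' hlt
    exfalso
    apply hlt.2
    funext l
    have hcl : c l = ⊥ := by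
      by_contra h
      have : l ∈ Finset.univ.filter (fun l => c l ≠ ⊥) := by
        simp [h]
      have := Finset.card_pos.mpr ⟨l, this⟩
      omega
    rcases hlt.1 l with h | h
    · rw [h, hcl]
    · rw [h, hcl]
  | succ N ih =>
    intro c hcard hc
    by_cases hmin : ∀ v', tupLT v' c → f v' = ⊥
    · exact ⟨c, tupLE_refl c, ⟨hc, hmin⟩, rfl⟩
    · push_neg at hmin
      obtain ⟨v', hlt, hv'⟩ := hmin
      have hfe : f v' = f c := by
        rcases hf v' c hlt.1 with h | h
        · exact absurd h hv'
        · exact h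
      have hssub : Finset.univ.filter (fun l => v' l ≠ ⊥) ⊂
          Finset.univ.filter (fun l => c l ≠ ⊥) := by
        constructor
        · intro l hl
          simp only [Finset.mem_filter, Finset.mem_univ, true_and] at hl ⊢
          rcases hlt.1 l with h | h
          · exact absurd h hl
          · rw [← h]; exact hl
        · intro hcont
          apply hlt.2
          have hdiff : ∃ l, v' l ≠ c l := by
            by_contra h
            push_neg at h
            exact hlt.2 (funext h)
          obtain ⟨l, hl⟩ := hdiff
          have hvl : v' l = ⊥ := by
            rcases hlt.1 l with h | h
            · exact h
            · exact absurd h hl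
          have hcl : c l ≠ ⊥ := by
            rw [hvl] at hl; exact fun h => hl h.symm
          have : l ∈ Finset.univ.filter (fun l => v' l ≠ ⊥) := by
            apply hcont; simp [hcl]
          simp only [Finset.mem_filter, Finset.mem_univ, true_and] at this
          exact absurd hvl this
      have hcard' : (Finset.univ.filter (fun l => v' l ≠ ⊥)).card ≤ N := by
        have := Finset.card_lt_card hssub
        omega
      obtain ⟨v, h1, h2, h3⟩ := ih v' hcard' hv'
      exact ⟨v, tupLE_trans h1 hlt.1, h2, h3.trans hfe⟩

lemma exists_min {k : ℕ} (f : (Fin k → Bb) → Bb) (hf : FlatMono f)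
    (c : Fin k → Bb) (hc : f c ≠ ⊥) :
    ∃ v, tupLE v c ∧ v ∈ traceDom f ∧ f v = f c :=
  exists_min_aux f hf _ c le_rfl hc

/-- if `bcc f = ∞`, then `f` is invariant under `P^m_{m,m}` for every
`m ≥ 0`. -/
theorem stmt_12 {k : ℕ} (f : (Fin k → Bb) → Bb) (hf : FlatMono f)
    (hb : bcc f = ⊤) :
    ∀ m : ℕ, Invariant f (PreseqSeg m m m) := by
  classical
  intro m x hx
  by_cases hbot : ∃ i : Fin m, f (fun l => x l i) = ⊥
  · obtain ⟨i, hi⟩ := hbot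
    exact Or.inl ⟨i, Finset.mem_range.mpr i.isLt, hi⟩
  push_neg at hbot
  right
  intro i j _ _
  by_contra hne
  -- choose a minimal trace point below each column
  have hch : ∀ a : Fin m, ∃ v, tupLE v (fun l => x l a) ∧ v ∈ traceDom f ∧
      f v = f (fun l => x l a) := fun a => exists_min f hf _ (hbot a)
  choose v hv1 hv2 hv3 using hch
  set S : Finset (Fin k → Bb) := Finset.image v Finset.univ with hS
  have hSsub : ↑S ⊆ traceDom f := by
    intro w hw
    simp only [hS, Finset.coe_image, Set.mem_image] at hw
    obtain ⟨a, _, rfl⟩ := hw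
    exact hv2 a
  -- if every chosen point is nonbot at coordinate l, the row x l has no bottom
  have hrow : ∀ l : Fin k, (∀ a : Fin m, v a l ≠ ⊥) →
      ∀ a b : Fin m, v a l = v b l := by
    intro l hnb a b
    have hval : ∀ a : Fin m, v a l = x l a := by
      intro a
      rcases hv1 a l with h | h
      · exact absurd h (hnb a)
      · exact h
    rcases hx l with ⟨i', _, hi'⟩ | hconst
    · exfalso
      apply hnb i'
      rw [hval i', hi']
    · rw [hval a, hval b]
      exact hconst a b (Finset.mem_range.mpr a.isLt) (Finset.mem_range.mpr b.isLt)
  have hScoh : LinCoherent (↑S : Set (Fin k → Bb)) := by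
    intro l hnb w hw w' hw'
    simp only [hS, Finset.coe_image, Set.mem_image] at hw hw'
    obtain ⟨a, _, rfl⟩ := hw
    obtain ⟨b, _, rfl⟩ := hw'
    apply hrow l
    intro a'
    apply hnb
    simp only [hS, Finset.coe_image, Set.mem_image]
    exact ⟨a', by simp, rfl⟩
  -- f (v i) and f (v j) are distinct booleans
  have hfvi : f (v i) = f (fun l => x l i) := hv3 i
  have hfvj : f (v j) = f (fun l => x l j) := hv3 j
  obtain ⟨bi, hbi⟩ : ∃ b : Bool, f (v i) = ↑b := by
    have := hbot i
    rw [← hfvi] at this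
    rcases hh : f (v i) with _ | b
    · exact absurd hh this
    · exact ⟨b, rfl⟩
  obtain ⟨bj, hbj⟩ : ∃ b : Bool, f (v j) = ↑b := by
    have := hbot j
    rw [← hfvj] at this
    rcases hh : f (v j) with _ | b
    · exact absurd hh this
    · exact ⟨b, rfl⟩
  have hbij : bi ≠ bj := by
    intro h
    apply hne
    show f (fun l => x l i) = f (fun l => x l j)
    rw [← hfvi, ← hfvj, hbi, hbj, h]
  have hvij : v i ≠ v j := by
    intro h
    apply hbij
    have : (bi : Bb) = (bj : Bb) := by rw [← hbi, ← hbj, h]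
    exact WithBot.coe_injective this
  by_cases hpair : ∀ l, v i l ≠ ⊥ → v j l ≠ ⊥ → v i l = v j l
  · -- join argument: a common upper bound gives a contradiction
    set u : Fin k → Bb := fun l => if v i l = ⊥ then v j l else v i l with hu
    have h1 : tupLE (v i) u := by
      intro l
      by_cases h : v i l = ⊥
      · exact Or.inl h
      · right; simp [hu, h]
    have h2 : tupLE (v j) u := by
      intro l
      by_cases h : v j l = ⊥
      · exact Or.inl h
      · right
        by_cases h' : v i l = ⊥
        · simp [hu, h']
        · simp only [hu, h', if_false]
          exact (hpair l h' h).symm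
    have hui : f u = ↑bi := by
      rcases hf (v i) u h1 with h | h
      · rw [hbi] at h; exact absurd h (by simp)
      · rw [← h, hbi]
    have huj : f u = ↑bj := by
      rcases hf (v j) u h2 with h | h
      · rw [hbj] at h; exact absurd h (by simp)
      · rw [← h, hbj]
    exact hbij (WithBot.coe_injective (hui ▸ huj))
  · -- otherwise S has at least 3 elements, contradicting bcc = ⊤
    push_neg at hpair
    obtain ⟨l, hil, hjl, hijl⟩ := hpair
    obtain ⟨a1, ha1⟩ : ∃ a1 : Fin m, v a1 l = ⊥ := by
      by_contra h
      push_neg at h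
      exact hijl (hrow l h i j)
    have hmemS : ∀ a : Fin m, v a ∈ S := by
      intro a
      simp only [hS, Finset.mem_image]
      exact ⟨a, Finset.mem_univ _, rfl⟩
    have hcard : 3 ≤ S.card := by
      have hsub : ({v i, v j, v a1} : Finset (Fin k → Bb)) ⊆ S := by
        intro w hw
        simp only [Finset.mem_insert, Finset.mem_singleton] at hw
        rcases hw with rfl | rfl | rfl <;> exact hmemS _
      have hd1 : v i ≠ v a1 := fun h => hil (h ▸ ha1)
      have hd2 : v j ≠ v a1 := fun h => hjl (h ▸ ha1)
      have : ({v i, v j, v a1} : Finset (Fin k → Bb)).card = 3 := by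
        rw [Finset.card_insert_of_notMem (by simp [hvij, hd1]),
          Finset.card_insert_of_notMem (by simp [hd2]), Finset.card_singleton]
      calc 3 = ({v i, v j, v a1} : Finset (Fin k → Bb)).card := this.symm
        _ ≤ S.card := Finset.card_le_card hsub
    have htt : ∃ w ∈ S, f w = ((true : Bool) : Bb) := by
      cases bi with
      | true => exact ⟨v i, hmemS i, hbi⟩
      | false =>
        cases bj with
        | true => exact ⟨v j, hmemS j, hbj⟩
        | false => exact absurd rfl hbij
    have hff : ∃ w ∈ S, f w = ((false : Bool) : Bb) := by
      cases bi with
      | false => exact ⟨v i, hmemS i, hbi⟩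
      | true =>
        cases bj with
        | false => exact ⟨v j, hmemS j, hbj⟩
        | true => exact absurd rfl hbij
    have hle : bcc f ≤ (S.card : ℕ∞) :=
      sInf_le ⟨S, hSsub, hcard, hScoh, htt, hff, rfl⟩
    rw [hb, top_le_iff] at hle
    exact (ENat.coe_ne_top S.card) hle
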